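/- For any α ∈ (0,1) and u ≥ 0, Γ(αu + α)/Γ(αu) = (1/Γ(1−α)) ∫_0^1 (1 − y^u) (1 − y^{1/α})^{−α−1} dy. -/

import Mathlib

open Real MeasureTheory


lemma real_beta (p q : ℝ) (hp : 0 < p) (hq : 0 < q) :
    ∫ x in Set.Ioo (0:ℝ) 1, x ^ (p-1) * (1-x) ^ (q-1)
      = Real.Gamma p * Real.Gamma q / Real.Gamma (p+q) := by
  have hGpos : 0 < Real.Gamma (p+q) := Real.Gamma_pos_of_pos (by linarith)
  have h := Complex.Gamma_mul_Gamma_eq_betaIntegral (s := (p:ℂ)) (t := (q:ℂ))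
    (by simpa using hp) (by simpa using hq)
  have hbeta : Complex.betaIntegral p q
      = ((∫ x in (0:ℝ)..1, x ^ (p-1) * (1-x) ^ (q-1) : ℝ) : ℂ) := by
    rw [Complex.betaIntegral, ← intervalIntegral.integral_ofReal]
    apply intervalIntegral.integral_congr
    intro x hx
    rw [Set.uIcc_of_le (by norm_num : (0:ℝ) ≤ 1)] at hx
    push_cast
    rw [Complex.ofReal_cpow hx.1, Complex.ofReal_cpow (by linarith [hx.2])]
    push_cast
    ring
  rw [hbeta, ← Complex.ofReal_add, Complex.Gamma_ofReal, Complex.Gamma_ofReal,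
    Complex.Gamma_ofReal, ← Complex.ofReal_mul, ← Complex.ofReal_mul,
    Complex.ofReal_inj] at h
  have : ∫ x in Set.Ioo (0:ℝ) 1, x ^ (p-1) * (1-x) ^ (q-1)
      = ∫ x in (0:ℝ)..1, x ^ (p-1) * (1-x) ^ (q-1) := by
    rw [intervalIntegral.integral_of_le (by norm_num : (0:ℝ) ≤ 1),
      MeasureTheory.integral_Ioc_eq_integral_Ioo]
  rw [this, eq_div_iff hGpos.ne', mul_comm]
  exact h.symm

-- Bernoulli-type bound
lemma one_sub_rpow_le' (u y : ℝ) (hu : 0 ≤ u) (hy : 0 ≤ y) (hy1 : y ≤ 1) :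
    1 - y ^ u ≤ (u + 1) * (1 - y) := by
  rcases le_total u 1 with h | h
  · have : y ≤ y ^ u := by
      calc y = y ^ (1:ℝ) := (Real.rpow_one y).symm
      _ ≤ y ^ u := by
        rcases eq_or_lt_of_le hy with h0 | h0
        · rcases eq_or_lt_of_le hu with h1 | h1
          · simp [← h0, ← h1]
          · simp [← h0, Real.zero_rpow (by linarith : u ≠ 0), Real.zero_rpow (one_ne_zero)]
        · exact Real.rpow_le_rpow_of_exponent_ge h0 hy1 h
    nlinarith
  · have hb := one_add_mul_self_le_rpow_one_add (s := y - 1) (by linarith) h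
    have : 1 + u * (y - 1) ≤ y ^ u := by simpa using hb
    nlinarith

lemma one_sub_inv_rpow_bounds {α y : ℝ} (hα0 : 0 < α) (hα1 : α < 1)
    (hy : y ∈ Set.Ioo (0:ℝ) 1) : 0 < 1 - y ^ (1/α) ∧ 1 - y ≤ 1 - y ^ (1/α) := by
  have h1 : y ^ (1/α) ≤ y := by
    have := Real.rpow_le_rpow_of_exponent_ge hy.1 hy.2.le
        (by rw [le_div_iff₀ hα0]; linarith : (1:ℝ) ≤ 1/α)
    simpa using this
  have h2 : y ^ (1/α) < 1 := Real.rpow_lt_one hy.1.le hy.2 (by positivity)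
  exact ⟨by linarith, by linarith⟩

lemma base_integrable {α : ℝ} (hα1 : α < 1) :
    IntegrableOn (fun y : ℝ => (1-y) ^ (-α)) (Set.Ioo (0:ℝ) 1) := by
  have h : IntervalIntegrable (fun x : ℝ => x ^ (-α)) volume 0 1 :=
    intervalIntegral.intervalIntegrable_rpow' (by linarith)
  have h2 := (h.comp_sub_left 1).symm
  simp only [sub_zero, sub_self] at h2
  rw [intervalIntegrable_iff_integrableOn_Ioc_of_le (by norm_num)] at h2
  exact (integrableOn_Ioc_iff_integrableOn_Ioo).mp h2

lemma integrable_main {α u : ℝ} (hα0 : 0 < α) (hα1 : α < 1) (hu : 0 ≤ u) :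
    IntegrableOn (fun y : ℝ => (1 - y ^ u) * (1 - y ^ (1/α)) ^ (-α - 1))
      (Set.Ioo (0:ℝ) 1) := by
  apply Integrable.mono (((base_integrable hα1).const_mul (u+1)))
  · apply Measurable.aestronglyMeasurable
    fun_prop
  · filter_upwards [ae_restrict_mem measurableSet_Ioo] with y hy
    obtain ⟨hw, hw2⟩ := one_sub_inv_rpow_bounds hα0 hα1 hy
    have h0 : (0:ℝ) < 1 - y := by linarith [hy.2]
    have hyu : y ^ u ≤ 1 := Real.rpow_le_one hy.1.le hy.2.le hu
    have key : (1 - y ^ u) * (1 - y ^ (1/α)) ^ (-α - 1) ≤ (u+1) * (1-y) ^ (-α) := by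
      have h2 : (1 - y ^ (1/α)) ^ (-α - 1) ≤ (1-y) ^ (-α - 1) :=
        (Real.rpow_le_rpow_iff_of_neg hw h0 (by linarith)).mpr hw2
      have h3 : (1 - y ^ u) * (1 - y ^ (1/α)) ^ (-α-1)
          ≤ ((u+1)*(1-y)) * (1-y) ^ (-α-1) :=
        mul_le_mul (one_sub_rpow_le' u y hu hy.1.le hy.2.le) h2
          (Real.rpow_nonneg hw.le _) (by positivity)
      calc (1 - y ^ u) * (1 - y ^ (1/α)) ^ (-α-1)
          ≤ ((u+1)*(1-y)) * (1-y) ^ (-α-1) := h3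
        _ = (u+1) * ((1-y) ^ (1:ℝ) * (1-y) ^ (-α-1)) := by rw [Real.rpow_one]; ring
        _ = (u+1) * (1-y) ^ (-α) := by rw [← Real.rpow_add h0]; norm_num
    rw [Real.norm_eq_abs, Real.norm_eq_abs,
      abs_of_nonneg (mul_nonneg (by linarith) (Real.rpow_nonneg hw.le _)),
      abs_of_nonneg (by positivity)]
    exact key

lemma integrable_aux {α u : ℝ} (hα0 : 0 < α) (hα1 : α < 1) (hu : 0 ≤ u) :
    IntegrableOn (fun y : ℝ => y ^ u * (1 - y ^ (1/α)) ^ (-α))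
      (Set.Ioo (0:ℝ) 1) := by
  apply Integrable.mono (base_integrable hα1)
  · apply Measurable.aestronglyMeasurable
    fun_prop
  · filter_upwards [ae_restrict_mem measurableSet_Ioo] with y hy
    obtain ⟨hw, hw2⟩ := one_sub_inv_rpow_bounds hα0 hα1 hy
    have h0 : (0:ℝ) < 1 - y := by linarith [hy.2]
    have hyu : y ^ u ≤ 1 := Real.rpow_le_one hy.1.le hy.2.le hu
    have h2 : (1 - y ^ (1/α)) ^ (-α) ≤ (1-y) ^ (-α) :=
      (Real.rpow_le_rpow_iff_of_neg hw h0 (by linarith)).mpr hw2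
    rw [Real.norm_eq_abs, Real.norm_eq_abs,
      abs_of_nonneg (mul_nonneg (Real.rpow_nonneg hy.1.le _) (Real.rpow_nonneg hw.le _)),
      abs_of_nonneg (by positivity)]
    calc y ^ u * (1 - y ^ (1/α)) ^ (-α) ≤ 1 * (1-y) ^ (-α) :=
          mul_le_mul hyu h2 (Real.rpow_nonneg hw.le _) one_pos.le
      _ = (1-y) ^ (-α) := one_mul _

lemma ibp_step {α u : ℝ} (hα0 : 0 < α) (hα1 : α < 1) (hu : 0 < u) :
    ∫ y in Set.Ioo (0:ℝ) 1, (1 - y ^ u) * (1 - y ^ (1/α)) ^ (-α - 1)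
      = u * ∫ y in Set.Ioo (0:ℝ) 1, y ^ u * (1 - y ^ (1/α)) ^ (-α) := by
  set F : ℝ → ℝ := fun y => (1 - y ^ u) * (y * (1 - y ^ (1/α)) ^ (-α)) with hF
  set f' : ℝ → ℝ := fun y => (1 - y ^ u) * (1 - y ^ (1/α)) ^ (-α - 1)
      - u * y ^ (u-1) * (y * (1 - y ^ (1/α)) ^ (-α)) with hf'
  have conv : ∀ f : ℝ → ℝ, IntegrableOn f (Set.Ioo (0:ℝ) 1) →
      IntervalIntegrable f volume 0 1 := fun f h =>
    (intervalIntegrable_iff_integrableOn_Ioc_of_le (by norm_num)).mpr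
      ((integrableOn_Ioc_iff_integrableOn_Ioo).mpr h)
  -- integrability of the second term
  have heq2 : (fun y : ℝ => u * (y ^ u * (1 - y ^ (1/α)) ^ (-α)))
      =ᵐ[volume.restrict (Set.Ioo (0:ℝ) 1)]
      (fun y : ℝ => u * y ^ (u-1) * (y * (1 - y ^ (1/α)) ^ (-α))) := by
    filter_upwards [ae_restrict_mem measurableSet_Ioo] with y hy
    rw [show u = (u-1)+1 by ring, Real.rpow_add hy.1, Real.rpow_one]
    ring_nf
  have hint2 : IntegrableOn
      (fun y : ℝ => u * y ^ (u-1) * (y * (1 - y ^ (1/α)) ^ (-α)))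
      (Set.Ioo (0:ℝ) 1) :=
    (((integrable_aux hα0 hα1 hu.le)).const_mul u).congr heq2
  have hint1 := integrable_main hα0 hα1 hu.le
  -- derivative
  have hderiv : ∀ y ∈ Set.Ioo (0:ℝ) 1, HasDerivAt F (f' y) y := by
    intro y hy
    have hw : 0 < 1 - y ^ (1/α) := (one_sub_inv_rpow_bounds hα0 hα1 hy).1
    set w := 1 - y ^ (1/α) with hwdef
    have hd1 : HasDerivAt (fun x : ℝ => x ^ u) (u * y ^ (u-1)) y :=
      Real.hasDerivAt_rpow_const (Or.inl hy.1.ne')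
    have hd2 : HasDerivAt (fun x : ℝ => x ^ (1/α)) ((1/α) * y ^ (1/α - 1)) y :=
      Real.hasDerivAt_rpow_const (Or.inl hy.1.ne')
    have hd3 : HasDerivAt (fun x : ℝ => 1 - x ^ (1/α)) (-((1/α) * y ^ (1/α-1))) y :=
      hd2.const_sub 1
    have hd4 : HasDerivAt (fun t : ℝ => t ^ (-α)) (-α * w ^ (-α - 1)) w :=
      Real.hasDerivAt_rpow_const (Or.inl hw.ne')
    have hd5 : HasDerivAt (fun x : ℝ => (1 - x ^ (1/α)) ^ (-α))
        ((-α * w ^ (-α-1)) * (-((1/α) * y ^ (1/α-1)))) y :=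
        HasDerivAt.comp (h₂ := fun t : ℝ => t ^ (-α)) y hd4 hd3
    have hd6 : HasDerivAt (fun x : ℝ => x * (1 - x ^ (1/α)) ^ (-α))
        (1 * w ^ (-α) + y * ((-α * w ^ (-α-1)) * (-((1/α) * y ^ (1/α-1))))) y :=
      (hasDerivAt_id y).mul hd5
    have hd7 : HasDerivAt (fun x : ℝ => 1 - x ^ u) (-(u * y ^ (u-1))) y :=
      hd1.const_sub 1
    have hD : 1 * w ^ (-α) + y * ((-α * w ^ (-α-1)) * (-((1/α) * y ^ (1/α-1))))
        = w ^ (-α - 1) := by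
      have hyy : y * y ^ (1/α - 1) = y ^ (1/α) := by
        conv_rhs => rw [show (1/α) = 1 + (1/α - 1) by ring]
        rw [Real.rpow_add hy.1, Real.rpow_one]
      have hww : w ^ (-α) = w * w ^ (-α-1) := by
        conv_lhs => rw [show (-α) = 1 + (-α-1) by ring]
        rw [Real.rpow_add hw, Real.rpow_one]
      have hα : -α * -(1/α) = 1 := by field_simp
      calc 1 * w ^ (-α) + y * ((-α * w ^ (-α-1)) * (-((1/α) * y ^ (1/α-1))))
          = w * w ^ (-α-1) + (-α * -(1/α)) * ((y * y ^ (1/α-1)) * w ^ (-α-1)) := by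
            rw [hww]; ring
        _ = w * w ^ (-α-1) + y ^ (1/α) * w ^ (-α-1) := by rw [hα, hyy]; ring
        _ = (w + y ^ (1/α)) * w ^ (-α-1) := by ring
        _ = w ^ (-α-1) := by rw [hwdef]; ring_nf
    have : HasDerivAt (fun x : ℝ => (1 - x ^ u) * (x * (1 - x ^ (1/α)) ^ (-α))) _ y :=
      hd7.mul hd6
    rw [hD] at this
    convert this using 1
    simp only [hf', hwdef]
    ring
  -- continuity on [0,1]
  have hcont : ContinuousOn F (Set.Icc (0:ℝ) 1) := by
    intro y hy
    rcases eq_or_lt_of_le hy.2 with h1 | h1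
    · -- y = 1 : squeeze
      rw [h1]
      have hF1 : F 1 = 0 := by simp [hF]
      unfold ContinuousWithinAt
      rw [hF1]
      apply squeeze_zero' (g := fun y : ℝ => (u+1) * (1-y) ^ (1-α))
      · filter_upwards [self_mem_nhdsWithin] with t ht
        have h0 : (0:ℝ) ≤ 1 - t ^ (1/α) := by
          have := Real.rpow_le_one ht.1 ht.2 (by positivity : (0:ℝ) ≤ 1/α)
          linarith
        have h2 : t ^ u ≤ 1 := Real.rpow_le_one ht.1 ht.2 hu.le
        have hnn := Real.rpow_nonneg h0 (-α)
        simp only [hF]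
        exact mul_nonneg (by linarith) (mul_nonneg ht.1 hnn)
      · filter_upwards [self_mem_nhdsWithin] with t ht
        rcases eq_or_lt_of_le ht.2 with h2 | h2
        · rw [h2]
          simp [hF, Real.one_rpow, Real.zero_rpow (by linarith : (1:ℝ)-α ≠ 0)]
        · rcases eq_or_lt_of_le ht.1 with h3 | h3
          · rw [← h3]
            simp only [hF]
            rw [Real.zero_rpow hu.ne', Real.zero_rpow (by positivity : (1:ℝ)/α ≠ 0)]
            simp [Real.rpow_natCast]
            positivity
          · have htI : t ∈ Set.Ioo (0:ℝ) 1 := ⟨h3, h2⟩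
            obtain ⟨hw, hw2⟩ := one_sub_inv_rpow_bounds hα0 hα1 htI
            have h0t : (0:ℝ) < 1 - t := by linarith
            have hb1 : 1 - t ^ u ≤ (u+1) * (1-t) := one_sub_rpow_le' u t hu.le h3.le h2.le
            have hb2 : (1 - t ^ (1/α)) ^ (-α) ≤ (1-t) ^ (-α) :=
              (Real.rpow_le_rpow_iff_of_neg hw h0t (by linarith)).mpr hw2
            have hb3 : t * (1 - t ^ (1/α)) ^ (-α) ≤ 1 * (1-t) ^ (-α) :=
              mul_le_mul h2.le hb2 (Real.rpow_nonneg hw.le _) (by norm_num)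
            have h2t : t ^ u ≤ 1 := Real.rpow_le_one h3.le h2.le hu.le
            calc F t ≤ ((u+1) * (1-t)) * (1 * (1-t) ^ (-α)) := by
                  apply mul_le_mul hb1 hb3
                    (mul_nonneg h3.le (Real.rpow_nonneg hw.le _)) (by positivity)
              _ = (u+1) * ((1-t) ^ (1:ℝ) * (1-t) ^ (-α)) := by rw [Real.rpow_one]; ring
              _ = (u+1) * (1-t) ^ (1-α) := by
                  rw [← Real.rpow_add h0t, show (1:ℝ) + -α = 1 - α by ring]
      · have hc : ContinuousAt (fun y : ℝ => (u+1) * (1-y) ^ (1-α)) 1 := by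
          apply ContinuousAt.mul continuousAt_const
          have houter : ContinuousAt (fun t : ℝ => t ^ (1-α)) (1 - (1:ℝ)) := by
            rw [sub_self]
            exact Real.continuousAt_rpow_const 0 (1-α) (Or.inr (by linarith))
          exact houter.comp (continuousAt_const.sub continuousAt_id)
        have hT : Filter.Tendsto (fun y : ℝ => (u+1) * (1-y) ^ (1-α))
            (nhdsWithin 1 (Set.Icc 0 1)) (nhds ((u+1) * ((1:ℝ)-1) ^ (1-α))) :=
          hc.tendsto.mono_left nhdsWithin_le_nhds
        simpa [Real.zero_rpow (by linarith : (1:ℝ)-α ≠ 0)] using hT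
    · -- y < 1 : genuine continuity
      apply ContinuousAt.continuousWithinAt
      have hyp : y ^ (1/α) < 1 := Real.rpow_lt_one hy.1 h1 (by positivity)
      have c1 : ContinuousAt (fun x : ℝ => x ^ u) y :=
        Real.continuousAt_rpow_const y u (Or.inr hu.le)
      have c2 : ContinuousAt (fun x : ℝ => x ^ (1/α)) y :=
        Real.continuousAt_rpow_const y (1/α) (Or.inr (by positivity))
      exact (continuousAt_const.sub c1).mul
        (continuousAt_id.mul ((continuousAt_const.sub c2).rpow_const
          (Or.inl (by simp only [Pi.sub_apply]; linarith))))
  -- FTC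
  have hFTC := intervalIntegral.integral_eq_sub_of_hasDeriv_right_of_le
    (by norm_num : (0:ℝ) ≤ 1) hcont
    (fun y hy => (hderiv y hy).hasDerivWithinAt)
    (by
      apply IntervalIntegrable.sub (conv _ hint1) (conv _ hint2))
  have hF0 : F 0 = 0 := by simp [hF]
  have hF1 : F 1 = 0 := by simp [hF]
  rw [hF0, hF1, sub_zero] at hFTC
  have hsub := intervalIntegral.integral_sub (conv _ hint1) (conv _ hint2)
  rw [hf'] at hFTC
  rw [hFTC] at hsub
  -- hsub : 0 = ∫ main - ∫ second
  have hmain : ∫ y in (0:ℝ)..1, (1 - y ^ u) * (1 - y ^ (1/α)) ^ (-α - 1)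
      = ∫ y in (0:ℝ)..1, u * y ^ (u-1) * (y * (1 - y ^ (1/α)) ^ (-α)) := by
    linarith [hsub]
  have e1 : ∫ y in Set.Ioo (0:ℝ) 1, (1 - y ^ u) * (1 - y ^ (1/α)) ^ (-α - 1)
      = ∫ y in (0:ℝ)..1, (1 - y ^ u) * (1 - y ^ (1/α)) ^ (-α - 1) := by
    rw [intervalIntegral.integral_of_le (by norm_num : (0:ℝ) ≤ 1),
      MeasureTheory.integral_Ioc_eq_integral_Ioo]
  have e2 : ∫ y in Set.Ioo (0:ℝ) 1, u * y ^ (u-1) * (y * (1 - y ^ (1/α)) ^ (-α))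
      = ∫ y in (0:ℝ)..1, u * y ^ (u-1) * (y * (1 - y ^ (1/α)) ^ (-α)) := by
    rw [intervalIntegral.integral_of_le (by norm_num : (0:ℝ) ≤ 1),
      MeasureTheory.integral_Ioc_eq_integral_Ioo]
  calc ∫ y in Set.Ioo (0:ℝ) 1, (1 - y ^ u) * (1 - y ^ (1/α)) ^ (-α - 1)
      = ∫ y in (0:ℝ)..1, (1 - y ^ u) * (1 - y ^ (1/α)) ^ (-α - 1) := e1
    _ = ∫ y in (0:ℝ)..1, u * y ^ (u-1) * (y * (1 - y ^ (1/α)) ^ (-α)) := hmain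
    _ = ∫ y in Set.Ioo (0:ℝ) 1, u * y ^ (u-1) * (y * (1 - y ^ (1/α)) ^ (-α)) := e2.symm
    _ = ∫ y in Set.Ioo (0:ℝ) 1, u * (y ^ u * (1 - y ^ (1/α)) ^ (-α)) :=
        (MeasureTheory.integral_congr_ae heq2).symm
    _ = u * ∫ y in Set.Ioo (0:ℝ) 1, y ^ u * (1 - y ^ (1/α)) ^ (-α) := by
        rw [MeasureTheory.integral_const_mul]

lemma subst_beta {α u : ℝ} (hα0 : 0 < α) (hα1 : α < 1) (hu : 0 ≤ u) :
    ∫ y in Set.Ioo (0:ℝ) 1, y ^ u * (1 - y ^ (1/α)) ^ (-α)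
      = α * (Real.Gamma (α*u+α) * Real.Gamma (1-α) / Real.Gamma (α*u+1)) := by
  have himg : (fun x : ℝ => x ^ α) '' Set.Ioo 0 1 = Set.Ioo (0:ℝ) 1 := by
    ext y
    constructor
    · rintro ⟨x, hx, rfl⟩
      exact ⟨Real.rpow_pos_of_pos hx.1 α, Real.rpow_lt_one hx.1.le hx.2 hα0⟩
    · intro hy
      refine ⟨y ^ (1/α), ⟨Real.rpow_pos_of_pos hy.1 _,
        Real.rpow_lt_one hy.1.le hy.2 (by positivity)⟩, ?_⟩
      show (y ^ (1/α)) ^ α = y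
      rw [← Real.rpow_mul hy.1.le, one_div_mul_cancel hα0.ne', Real.rpow_one]
  have hderiv : ∀ x ∈ Set.Ioo (0:ℝ) 1,
      HasDerivWithinAt (fun x : ℝ => x ^ α) (α * x ^ (α-1)) (Set.Ioo 0 1) x :=
    fun x hx => (Real.hasDerivAt_rpow_const (Or.inl hx.1.ne')).hasDerivWithinAt
  have hinj : Set.InjOn (fun x : ℝ => x ^ α) (Set.Ioo 0 1) := by
    intro a ha b hb h
    have h2 : ((a:ℝ) ^ α) ^ (1/α) = (b ^ α) ^ (1/α) := congrArg (· ^ (1/α)) h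
    rwa [← Real.rpow_mul ha.1.le, ← Real.rpow_mul hb.1.le,
      mul_one_div_cancel hα0.ne', Real.rpow_one, Real.rpow_one] at h2
  have hsub := MeasureTheory.integral_image_eq_integral_abs_deriv_smul
    measurableSet_Ioo hderiv hinj (fun y : ℝ => y ^ u * (1 - y ^ (1/α)) ^ (-α))
  rw [himg] at hsub
  rw [hsub]
  have hcongr : ∫ x in Set.Ioo (0:ℝ) 1,
      |α * x ^ (α-1)| • ((x ^ α) ^ u * (1 - (x ^ α) ^ (1/α)) ^ (-α))
      = ∫ x in Set.Ioo (0:ℝ) 1,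
        α * (x ^ ((α*u+α)-1) * (1-x) ^ ((1-α)-1)) := by
    apply MeasureTheory.setIntegral_congr_fun measurableSet_Ioo
    intro x hx
    have hx0 := hx.1
    have hxa : (x ^ α) ^ (1/α) = x := by
      rw [← Real.rpow_mul hx0.le, mul_one_div_cancel hα0.ne', Real.rpow_one]
    have habs : |α * x ^ (α-1)| = α * x ^ (α-1) := by
      apply abs_of_nonneg; positivity
    show |α * x ^ (α-1)| * ((x ^ α) ^ u * (1 - (x ^ α) ^ (1/α)) ^ (-α)) = _
    rw [habs, hxa, ← Real.rpow_mul hx0.le]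
    have hxx : x ^ (α-1) * x ^ (α*u) = x ^ ((α*u+α)-1) := by
      rw [← Real.rpow_add hx0]; ring_nf
    have hexp : ((1:ℝ)-α)-1 = -α := by ring
    rw [hexp]
    calc α * x ^ (α-1) * (x ^ (α*u) * (1-x) ^ (-α))
        = α * ((x ^ (α-1) * x ^ (α*u)) * (1-x) ^ (-α)) := by ring
      _ = α * (x ^ ((α*u+α)-1) * (1-x) ^ (-α)) := by rw [hxx]
  rw [hcongr, MeasureTheory.integral_const_mul,
    real_beta (α*u+α) (1-α) (by positivity) (by linarith),
    show α*u+α+(1-α) = α*u+1 by ring]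

theorem gamma_ratio_integral (α u : ℝ) (hα : α ∈ Set.Ioo (0:ℝ) 1) (hu : 0 ≤ u) :
    Real.Gamma (α*u + α) / Real.Gamma (α*u)
      = (1 / Real.Gamma (1 - α)) *
          ∫ y in Set.Ioo (0:ℝ) 1, (1 - y ^ u) * (1 - y ^ (1/α)) ^ (-α - 1) := by
  obtain ⟨hα0, hα1⟩ := hα
  rcases eq_or_lt_of_le hu with h0 | h0
  · subst h0
    simp [Real.rpow_zero, Real.Gamma_zero]
  · rw [ibp_step hα0 hα1 h0, subst_beta hα0 hα1 hu]
    have hGu : 0 < Real.Gamma (α*u) := Real.Gamma_pos_of_pos (by positivity)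
    have hG1 : 0 < Real.Gamma (1-α) := Real.Gamma_pos_of_pos (by linarith)
    have hadd : Real.Gamma (α*u+1) = (α*u) * Real.Gamma (α*u) :=
      Real.Gamma_add_one (by positivity)
    rw [hadd]
    field_simp
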